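/- Let m > 1 and 1 ≤ N ≤ m, assume (H1), and assume f is continuously differentiable on (0,∞). Let u be a radial solution on [0,R) with α = u(0), let r = r(u) be its inverse on (0,α), and set ω(u) = r(u)^{N−1}/(r'(u)|r'(u)|^{m−2}) and, for a ∈ ℝ, P(u) = a u ω(u) + r(u)^N ( (m−1)/m · 1/|r'(u)|^m + (a/N) u f(u) ). Then for all u ∈ (0,α): if a ≠ 0, P(u) = (a + 1 − N/m) ∫_α^u ω(τ) dτ + (a/N) ∫_α^u r(τ)^N ( τ f'(τ) − ((N−a)/a) f(τ) ) dτ; and if a = 0, P(u) = −((N−m)/m) ∫_α^u ω(τ) dτ − ∫_α^u r(τ)^N f(τ) dτ. -/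

import Mathlib

open Filter Set MeasureTheory intervalIntegral

noncomputable section

/-- The half-open interval `[0, R)` inside `ℝ`, where `R : EReal` may be `∞`. -/
def domR (R : EReal) : Set ℝ := {r : ℝ | 0 ≤ r ∧ (r : EReal) < R}

/-- The filter describing `r → R⁻` inside `ℝ` (it equals `atTop` when `R = ∞`). -/
def limR (R : EReal) : Filter ℝ := Filter.comap Real.toEReal (nhdsWithin R (Set.Iio R))

/-- Assumption (H1): `f` is continuous on `(0,∞)`, nonpositive on `(0,b]` and
positive on `(b,∞)`, with `b > 0`. -/
def H1cond (b : ℝ) (f : ℝ → ℝ) : Prop :=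
  0 < b ∧ ContinuousOn f (Set.Ioi 0) ∧
    (∀ u : ℝ, 0 < u → u ≤ b → f u ≤ 0) ∧ (∀ u : ℝ, b < u → 0 < f u)

/-- `u` (with derivative `u'`) is a radial solution on `[0, R)` of
`(r^{N-1} |u'|^{m-2} u')' = - r^{N-1} f(u)`, positive, `C¹` up to the origin,
with `u'(0) = 0` and `u, u' → 0` as `r → R`. -/
def IsRadialSolution (N : ℕ) (m : ℝ) (f : ℝ → ℝ) (R : EReal) (u u' : ℝ → ℝ) : Prop :=
  0 < R ∧
  (∀ r ∈ domR R, HasDerivWithinAt u (u' r) (domR R) r) ∧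
  ContinuousOn u' (domR R) ∧
  (∀ r ∈ domR R, 0 < u r) ∧
  u' 0 = 0 ∧
  (∀ r : ℝ, 0 < r → (r : EReal) < R →
    HasDerivAt (fun s : ℝ => s ^ (N - 1) * |u' s| ^ (m - 2) * u' s)
      (-(r ^ (N - 1) * f (u r))) r) ∧
  Filter.Tendsto u (limR R) (nhds 0) ∧
  Filter.Tendsto u' (limR R) (nhds 0)

/-- `rr` is the (strictly decreasing) inverse on `(0, α)` of a radial solution `u`,
with derivatives `rr'`, `rr''`, satisfying the transformed ODE
`(m-1) r'' = (N-1) r'²/r + f(u) |r'|^m r'`. -/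
def IsInvSol (N : ℕ) (m α : ℝ) (f : ℝ → ℝ) (R : EReal) (u rr rr' rr'' : ℝ → ℝ) : Prop :=
  (∀ v ∈ Set.Ioo 0 α,
    0 < rr v ∧ (rr v : EReal) < R ∧ u (rr v) = v ∧
    HasDerivAt rr (rr' v) v ∧ rr' v < 0 ∧ HasDerivAt rr' (rr'' v) v ∧
    (m - 1) * rr'' v = ((N : ℝ) - 1) * (rr' v) ^ 2 / rr v + f v * |rr' v| ^ m * rr' v) ∧
  (∀ x : ℝ, 0 < x → (x : EReal) < R → ∃ v ∈ Set.Ioo 0 α, rr v = x)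

/-- The function `ω(u) = r(u)^{N-1} / (r'(u) |r'(u)|^{m-2})`. -/
def omegaF (N : ℕ) (m : ℝ) (rr rr' : ℝ → ℝ) (v : ℝ) : ℝ :=
  rr v ^ (N - 1) / (rr' v * |rr' v| ^ (m - 2))

/-- The function `P(u) = a u ω(u) + r(u)^N ((m-1)/m · 1/|r'(u)|^m + (a/N) u f(u))`. -/
def PF (N : ℕ) (m a : ℝ) (f rr rr' : ℝ → ℝ) (v : ℝ) : ℝ :=
  a * v * omegaF N m rr rr' v +
    rr v ^ N * ((m - 1) / m * (1 / |rr' v| ^ m) + a / (N : ℝ) * v * f v)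


lemma domR_mem_nhds {R : EReal} {x : ℝ} (hx : 0 < x) (hxR : (x : EReal) < R) :
    domR R ∈ nhds x := by
  have hopen : IsOpen ((Set.Ioi (0:ℝ)) ∩ Real.toEReal ⁻¹' (Set.Iio R)) :=
    isOpen_Ioi.inter (isOpen_Iio.preimage continuous_coe_real_ereal)
  refine Filter.mem_of_superset (hopen.mem_nhds ⟨hx, hxR⟩) ?_
  rintro r ⟨hr1, hr2⟩; exact ⟨le_of_lt hr1, hr2⟩

section main
variable {N : ℕ} {m b : ℝ} {f f' : ℝ → ℝ} {R : EReal} {u u' rr rr' rr'' : ℝ → ℝ}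

/-- inverse derivative relation -/
lemma inv_deriv (hu : IsRadialSolution N m f R u u')
    (hinv : IsInvSol N m (u 0) f R u rr rr' rr'')
    {v : ℝ} (hv : v ∈ Set.Ioo 0 (u 0)) : u' (rr v) * rr' v = 1 := by
  obtain ⟨hr0, hrR, hurr, hdr, hrn, -, -⟩ := hinv.1 v hv
  have hud : HasDerivAt u (u' (rr v)) (rr v) :=
    (hu.2.1 (rr v) ⟨hr0.le, hrR⟩).hasDerivAt (domR_mem_nhds hr0 hrR)
  have hcomp : HasDerivAt (u ∘ rr) (u' (rr v) * rr' v) v := hud.comp v hdr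
  have heq : (u ∘ rr) =ᶠ[nhds v] id := by
    filter_upwards [isOpen_Ioo.mem_nhds hv] with w hw
    exact (hinv.1 w hw).2.2.1
  have : HasDerivAt id (u' (rr v) * rr' v) v := hcomp.congr_of_eventuallyEq heq.symm
  exact this.unique (hasDerivAt_id v)

lemma omega_eq (hu : IsRadialSolution N m f R u u')
    (hinv : IsInvSol N m (u 0) f R u rr rr' rr'')
    {v : ℝ} (hv : v ∈ Set.Ioo 0 (u 0)) :
    omegaF N m rr rr' v = rr v ^ (N - 1) * |u' (rr v)| ^ (m - 2) * u' (rr v) := by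
  obtain ⟨hr0, hrR, hurr, hdr, hrn, -, -⟩ := hinv.1 v hv
  have h1 := inv_deriv hu hinv hv
  have hrn' : rr' v ≠ 0 := ne_of_lt hrn
  have hue : u' (rr v) = (rr' v)⁻¹ := by field_simp at h1 ⊢; linarith [h1]
  rw [hue, omegaF, abs_inv, Real.inv_rpow (abs_nonneg _)]
  have habs : |rr' v| ^ (m - 2) ≠ 0 :=
    (Real.rpow_pos_of_pos (abs_pos.2 hrn') _).ne'
  rw [div_eq_mul_inv, mul_inv]
  ring

lemma omega_deriv (hu : IsRadialSolution N m f R u u')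
    (hinv : IsInvSol N m (u 0) f R u rr rr' rr'')
    {v : ℝ} (hv : v ∈ Set.Ioo 0 (u 0)) :
    HasDerivAt (omegaF N m rr rr') (-(rr v ^ (N - 1) * f v) * rr' v) v := by
  obtain ⟨hr0, hrR, hurr, hdr, hrn, -, -⟩ := hinv.1 v hv
  have hq := hu.2.2.2.2.2.1 (rr v) hr0 hrR
  rw [hurr] at hq
  have hcomp := hq.comp v hdr
  refine HasDerivAt.congr_of_eventuallyEq hcomp ?_
  filter_upwards [isOpen_Ioo.mem_nhds hv] with w hw
  simpa [Function.comp] using omega_eq hu hinv hw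

lemma P_deriv (hm : 1 < m) (hN1 : 1 ≤ N)
    (hf' : ∀ x : ℝ, 0 < x → HasDerivAt f (f' x) x)
    (hu : IsRadialSolution N m f R u u')
    (hinv : IsInvSol N m (u 0) f R u rr rr' rr'')
    {v : ℝ} (hv : v ∈ Set.Ioo 0 (u 0)) (a : ℝ) :
    HasDerivAt (PF N m a f rr rr')
      ((a + 1 - (N : ℝ) / m) * omegaF N m rr rr' v +
        rr v ^ N * (a / (N : ℝ) * (v * f' v) + (a - (N : ℝ)) / (N : ℝ) * f v)) v := by
  obtain ⟨hr0, hrR, hurr, hdr, hrn, hdr2, hode⟩ := hinv.1 v hv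
  have hω := omega_deriv hu hinv hv
  have hN0 : (N : ℝ) ≠ 0 := Nat.cast_ne_zero.2 (by omega)
  -- term 1 : a * w * ω w
  have h1 : HasDerivAt (fun w => a * w * omegaF N m rr rr' w)
      ((a * 1) * omegaF N m rr rr' v + (a * v) * (-(rr v ^ (N - 1) * f v) * rr' v)) v :=
    ((hasDerivAt_id v).const_mul a).mul hω
  -- subterm A : (m-1)/m * (1/|rr' w|^m)
  have ht0 : (0:ℝ) < -rr' v := by linarith
  have hneg : HasDerivAt (fun w => -rr' w) (-rr'' v) v := hdr2.neg
  have hpow : HasDerivAt (fun w => (-rr' w) ^ m)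
      ((-rr'' v) * m * (-rr' v) ^ (m - 1)) v := hneg.rpow_const (Or.inl ht0.ne')
  have hpm : (0:ℝ) < (-rr' v) ^ m := Real.rpow_pos_of_pos ht0 m
  have hinvp : HasDerivAt (fun w => ((-rr' w) ^ m)⁻¹)
      (-((-rr'' v) * m * (-rr' v) ^ (m - 1)) / ((-rr' v) ^ m) ^ 2) v := hpow.inv hpm.ne'
  have hA0 : HasDerivAt (fun w => (m - 1) / m * ((-rr' w) ^ m)⁻¹)
      ((m - 1) / m * (-((-rr'' v) * m * (-rr' v) ^ (m - 1)) / ((-rr' v) ^ m) ^ 2)) v :=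
    hinvp.const_mul _
  have hA : HasDerivAt (fun w => (m - 1) / m * (1 / |rr' w| ^ m))
      ((m - 1) / m * (-((-rr'' v) * m * (-rr' v) ^ (m - 1)) / ((-rr' v) ^ m) ^ 2)) v := by
    refine hA0.congr_of_eventuallyEq ?_
    filter_upwards [hdr2.continuousAt.eventually_lt_const hrn] with w hw
    rw [abs_of_neg hw, one_div]
  -- subterm B : a/N * w * f w
  have hB : HasDerivAt (fun w => a / (N:ℝ) * w * f w)
      ((a / (N:ℝ) * 1) * f v + (a / (N:ℝ) * v) * f' v) v :=
    ((hasDerivAt_id v).const_mul _).mul (hf' v hv.1)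
  -- outer : rr w ^ N
  have hout : HasDerivAt (fun w => rr w ^ N) ((N:ℝ) * rr v ^ (N - 1) * rr' v) v := hdr.pow N
  have h2 := hout.mul (hA.add hB)
  have hP := h1.add h2
  have hPP : HasDerivAt (PF N m a f rr rr')
      (((a * 1) * omegaF N m rr rr' v + (a * v) * (-(rr v ^ (N - 1) * f v) * rr' v)) +
        (((N:ℝ) * rr v ^ (N - 1) * rr' v) *
            ((m - 1) / m * (1 / |rr' v| ^ m) + a / (N:ℝ) * v * f v) +
          rr v ^ N *
            ((m - 1) / m * (-((-rr'' v) * m * (-rr' v) ^ (m - 1)) / ((-rr' v) ^ m) ^ 2) +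
              ((a / (N:ℝ) * 1) * f v + (a / (N:ℝ) * v) * f' v)))) v := hP
  clear hP h1 h2 hA hA0 hB hout hinvp hpow hneg hω
  convert hPP using 1
  obtain ⟨t, ht0', hts⟩ : ∃ t : ℝ, 0 < t ∧ rr' v = -t := ⟨-rr' v, ht0, by ring⟩
  have hm1 : m - 1 ≠ 0 := by linarith
  have hm0 : m ≠ 0 := by linarith
  have e1 : t ^ (m - 1) = t ^ (m - 2) * t := by
    rw [← Real.rpow_add_one ht0'.ne']; congr 1; ring
  have e2 : t ^ m = t ^ (m - 2) * t * t := by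
    rw [← Real.rpow_add_one ht0'.ne', ← Real.rpow_add_one ht0'.ne']; congr 1; ring
  have hBN : rr v ^ N = rr v ^ (N - 1) * rr v := by
    rw [← pow_succ]; congr 1; omega
  rw [hts] at hode
  simp only [omegaF, hts, neg_neg, abs_neg, abs_of_pos ht0', e1, e2, hBN] at hode ⊢
  have hs2 : rr'' v = (((N:ℝ) - 1) * t ^ 2 / rr v + f v * (t ^ (m - 2) * t * t) * (-t)) / (m - 1) := by
    rw [eq_div_iff hm1]
    linear_combination hode
  rw [hs2]
  have hA' : t ^ (m - 2) ≠ 0 := (Real.rpow_pos_of_pos ht0' _).ne'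
  have hr0' : rr v ≠ 0 := hr0.ne'
  field_simp
  ring

end main

/-- generic integrability up to the bad endpoint -/
lemma intervalIntegrable_of_tendsto {F : ℝ → ℝ} {v α L : ℝ} (hv : v < α)
    (hc : ∀ x ∈ Set.Ico v α, ContinuousAt F x)
    (ht : Tendsto F (nhdsWithin α (Set.Iio α)) (nhds L)) :
    IntervalIntegrable F volume v α := by
  have hev : ∀ᶠ w in nhdsWithin α (Set.Iio α), |F w| ≤ |L| + 1 :=
    Filter.Tendsto.eventually_le_const (lt_add_of_pos_right |L| one_pos)
      ((continuous_abs.tendsto L).comp ht)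
  obtain ⟨l, hl, hsub⟩ := mem_nhdsLT_iff_exists_Ioo_subset.1 hev
  set w0 : ℝ := max v l with hw0
  have hw0α : w0 < α := max_lt hv hl
  have hvw0 : v ≤ w0 := le_max_left _ _
  have I1 : IntervalIntegrable F volume v w0 := by
    apply ContinuousOn.intervalIntegrable
    intro x hx
    rw [uIcc_of_le hvw0] at hx
    exact (hc x ⟨hx.1, lt_of_le_of_lt hx.2 hw0α⟩).continuousWithinAt
  have I2 : IntervalIntegrable F volume w0 α := by
    rw [intervalIntegrable_iff_integrableOn_Ioo_of_le hw0α.le]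
    refine ⟨ContinuousOn.aestronglyMeasurable
        (fun x hx => (hc x ⟨le_trans hvw0 hx.1.le, hx.2⟩).continuousWithinAt)
        measurableSet_Ioo,
      MeasureTheory.HasFiniteIntegral.of_bounded (C := |L| + 1) ?_⟩
    rw [ae_restrict_iff' measurableSet_Ioo]
    filter_upwards with x hx
    exact hsub ⟨lt_of_le_of_lt (le_max_right v l) hx.1, hx.2⟩
  exact I1.trans I2

section limits
variable {N : ℕ} {m b : ℝ} {f f' : ℝ → ℝ} {R : EReal} {u u' rr rr' rr'' : ℝ → ℝ}

lemma rr_anti (hinv : IsInvSol N m (u 0) f R u rr rr' rr'') :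
    StrictAntiOn rr (Set.Ioo 0 (u 0)) := by
  apply strictAntiOn_of_deriv_neg (convex_Ioo _ _)
  · exact fun w hw => ((hinv.1 w hw).2.2.2.1.continuousAt).continuousWithinAt
  · intro w hw
    rw [interior_Ioo] at hw
    rw [(hinv.1 w hw).2.2.2.1.deriv]
    exact (hinv.1 w hw).2.2.2.2.1

lemma tendsto_rr (hu : IsRadialSolution N m f R u u')
    (hinv : IsInvSol N m (u 0) f R u rr rr' rr'') (hα : 0 < u 0) :
    Tendsto rr (nhdsWithin (u 0) (Set.Iio (u 0))) (nhds 0) := by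
  rw [tendsto_order]
  constructor
  · intro l hl
    filter_upwards [Ioo_mem_nhdsLT hα]
      with w hw
    exact lt_trans hl (hinv.1 w hw).1
  · intro l hl
    obtain ⟨c', hc'0, hc'R⟩ := exists_between hu.1
    have hctop : c' ≠ ⊤ := ne_top_of_lt hc'R
    have hcbot : c' ≠ ⊥ := ne_bot_of_gt hc'0
    lift c' to ℝ using ⟨hctop, hcbot⟩ with c
    have hc0 : 0 < c := by exact_mod_cast hc'0
    set x : ℝ := min c (l / 2) with hx
    have hx0 : 0 < x := lt_min hc0 (by linarith)
    have hxR : (x : EReal) < R := lt_of_le_of_lt (by exact_mod_cast min_le_left c (l/2)) hc'R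
    obtain ⟨v0, hv0mem, hv0⟩ := hinv.2 x hx0 hxR
    filter_upwards [Ioo_mem_nhdsLT hv0mem.2]
      with w hw
    have hwmem : w ∈ Set.Ioo 0 (u 0) := ⟨lt_trans hv0mem.1 hw.1, hw.2⟩
    calc rr w < rr v0 := rr_anti hinv hv0mem hwmem hw.1
    _ = x := hv0
    _ ≤ l / 2 := min_le_right _ _
    _ < l := by linarith

lemma tendsto_u'rr (hu : IsRadialSolution N m f R u u')
    (hinv : IsInvSol N m (u 0) f R u rr rr' rr'') (hα : 0 < u 0) :
    Tendsto (fun w => u' (rr w)) (nhdsWithin (u 0) (Set.Iio (u 0))) (nhds 0) := by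
  have h0dom : (0:ℝ) ∈ domR R := ⟨le_refl _, hu.1⟩
  have hcw : Tendsto u' (nhdsWithin 0 (domR R)) (nhds 0) := by
    have := hu.2.2.1 0 h0dom
    rwa [ContinuousWithinAt, hu.2.2.2.2.1] at this
  apply hcw.comp
  rw [tendsto_nhdsWithin_iff]
  refine ⟨tendsto_rr hu hinv hα, ?_⟩
  filter_upwards [Ioo_mem_nhdsLT hα]
    with w hw
  exact ⟨(hinv.1 w hw).1.le, (hinv.1 w hw).2.1⟩

end limits

section limits2
variable {N : ℕ} {m b : ℝ} {f f' : ℝ → ℝ} {R : EReal} {u u' rr rr' rr'' : ℝ → ℝ}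

lemma u'rr_ne (hu : IsRadialSolution N m f R u u')
    (hinv : IsInvSol N m (u 0) f R u rr rr' rr'')
    {w : ℝ} (hw : w ∈ Set.Ioo 0 (u 0)) : u' (rr w) ≠ 0 := by
  intro h
  have h1 := inv_deriv hu hinv hw
  rw [h, zero_mul] at h1
  exact zero_ne_one h1

lemma tendsto_omega (hm : 1 < m) (hu : IsRadialSolution N m f R u u')
    (hinv : IsInvSol N m (u 0) f R u rr rr' rr'') (hα : 0 < u 0) :
    Tendsto (omegaF N m rr rr') (nhdsWithin (u 0) (Set.Iio (u 0))) (nhds 0) := by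
  have hab : Tendsto (fun w => |u' (rr w)|) (nhdsWithin (u 0) (Set.Iio (u 0))) (nhds 0) := by
    simpa [Function.comp_def] using (continuous_abs.tendsto 0).comp (tendsto_u'rr hu hinv hα)
  have h2 : Tendsto (fun w => |u' (rr w)| ^ (m - 1))
      (nhdsWithin (u 0) (Set.Iio (u 0))) (nhds 0) := by
    have hc : ContinuousAt (fun x : ℝ => x ^ (m - 1)) 0 :=
      Real.continuousAt_rpow_const 0 (m - 1) (Or.inr (by linarith))
    simpa [Real.zero_rpow (show m - 1 ≠ 0 by linarith), Function.comp_def] using hc.tendsto.comp hab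
  have hg : Tendsto (fun w => rr w ^ (N - 1) * |u' (rr w)| ^ (m - 1))
      (nhdsWithin (u 0) (Set.Iio (u 0))) (nhds 0) := by
    simpa using ((tendsto_rr hu hinv hα).pow (N - 1)).mul h2
  apply squeeze_zero_norm' ?_ hg
  filter_upwards [Ioo_mem_nhdsLT hα]
    with w hw
  have hne : u' (rr w) ≠ 0 := u'rr_ne hu hinv hw
  have e : |u' (rr w)| ^ (m - 2) * |u' (rr w)| = |u' (rr w)| ^ (m - 1) := by
    rw [← Real.rpow_add_one (abs_ne_zero.2 hne)]; congr 1; ring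
  rw [Real.norm_eq_abs, omega_eq hu hinv hw, abs_mul, abs_mul,
    abs_of_nonneg (pow_nonneg (hinv.1 w hw).1.le _),
    abs_of_nonneg (Real.rpow_nonneg (abs_nonneg _) _), mul_assoc, e]

lemma one_div_abs_eq (hu : IsRadialSolution N m f R u u')
    (hinv : IsInvSol N m (u 0) f R u rr rr' rr'')
    {w : ℝ} (hw : w ∈ Set.Ioo 0 (u 0)) (p : ℝ) :
    1 / |rr' w| ^ p = |u' (rr w)| ^ p := by
  have hrn : rr' w ≠ 0 := ne_of_lt (hinv.1 w hw).2.2.2.2.1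
  have h1 := inv_deriv hu hinv hw
  have hue : u' (rr w) = (rr' w)⁻¹ := by
    field_simp at h1 ⊢; linarith [h1]
  rw [hue, abs_inv, Real.inv_rpow (abs_nonneg _), one_div]

lemma tendsto_PF (hm : 1 < m) (hN1 : 1 ≤ N) (hf : H1cond b f)
    (hu : IsRadialSolution N m f R u u')
    (hinv : IsInvSol N m (u 0) f R u rr rr' rr'') (hα : 0 < u 0) (a : ℝ) :
    Tendsto (PF N m a f rr rr') (nhdsWithin (u 0) (Set.Iio (u 0))) (nhds 0) := by
  set l := nhdsWithin (u 0) (Set.Iio (u 0)) with hldef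
  have hid : Tendsto (fun w : ℝ => w) l (nhds (u 0)) :=
    tendsto_id.mono_left nhdsWithin_le_nhds
  have hfα : Tendsto f l (nhds (f (u 0))) :=
    ((hf.2.1.continuousAt (Ioi_mem_nhds hα)).tendsto).mono_left nhdsWithin_le_nhds
  have hab : Tendsto (fun w => |u' (rr w)|) l (nhds 0) := by
    simpa [Function.comp_def] using (continuous_abs.tendsto 0).comp (tendsto_u'rr hu hinv hα)
  have hm0 : Tendsto (fun w => |u' (rr w)| ^ m) l (nhds 0) := by
    have hc : ContinuousAt (fun x : ℝ => x ^ m) 0 :=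
      Real.continuousAt_rpow_const 0 m (Or.inr (by linarith))
    simpa [Real.zero_rpow (show m ≠ 0 by linarith), Function.comp_def] using hc.tendsto.comp hab
  have hQ : Tendsto (fun w => a * w * omegaF N m rr rr' w +
      rr w ^ N * ((m - 1) / m * |u' (rr w)| ^ m + a / (N:ℝ) * w * f w)) l (nhds 0) := by
    have hbig : Tendsto (fun w => a * w * omegaF N m rr rr' w +
        rr w ^ N * ((m - 1) / m * |u' (rr w)| ^ m + a / (N:ℝ) * w * f w)) l
        (nhds (a * u 0 * 0 + 0 ^ N * ((m - 1) / m * 0 + a / (N:ℝ) * u 0 * f (u 0)))) :=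
      ((tendsto_const_nhds.mul hid).mul (tendsto_omega hm hu hinv hα)).add
        (((tendsto_rr hu hinv hα).pow N).mul
          ((tendsto_const_nhds.mul hm0).add ((tendsto_const_nhds.mul hid).mul hfα)))
    simpa [zero_pow (show N ≠ 0 by omega)] using hbig
  refine Tendsto.congr' ?_ hQ
  filter_upwards [Ioo_mem_nhdsLT hα]
    with w hw
  rw [PF, one_div_abs_eq hu hinv hw m]

end limits2

def GF (N : ℕ) (m a : ℝ) (f f' rr rr' : ℝ → ℝ) (τ : ℝ) : ℝ :=
  (a + 1 - (N : ℝ) / m) * omegaF N m rr rr' τ +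
    rr τ ^ N * (a / (N : ℝ) * (τ * f' τ) + (a - (N : ℝ)) / (N : ℝ) * f τ)

section key
variable {N : ℕ} {m b : ℝ} {f f' : ℝ → ℝ} {R : EReal} {u u' rr rr' rr'' : ℝ → ℝ}

lemma GF_contAt (hf : H1cond b f) (hf'c : ContinuousOn f' (Set.Ioi 0))
    (hu : IsRadialSolution N m f R u u')
    (hinv : IsInvSol N m (u 0) f R u rr rr' rr'')
    {x : ℝ} (hx : x ∈ Set.Ioo 0 (u 0)) (a : ℝ) :
    ContinuousAt (GF N m a f f' rr rr') x := by
  have hω : ContinuousAt (omegaF N m rr rr') x := (omega_deriv hu hinv hx).continuousAt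
  have hrr : ContinuousAt rr x := (hinv.1 x hx).2.2.2.1.continuousAt
  have hfx : ContinuousAt f x := hf.2.1.continuousAt (Ioi_mem_nhds hx.1)
  have hf'x : ContinuousAt f' x := hf'c.continuousAt (Ioi_mem_nhds hx.1)
  exact (continuousAt_const.mul hω).add ((hrr.pow N).mul
    ((continuousAt_const.mul (continuousAt_id.mul hf'x)).add (continuousAt_const.mul hfx)))

lemma tendsto_GF (hm : 1 < m) (hN1 : 1 ≤ N) (hf : H1cond b f)
    (hf'c : ContinuousOn f' (Set.Ioi 0))
    (hu : IsRadialSolution N m f R u u')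
    (hinv : IsInvSol N m (u 0) f R u rr rr' rr'') (hα : 0 < u 0) (a : ℝ) :
    Tendsto (GF N m a f f' rr rr') (nhdsWithin (u 0) (Set.Iio (u 0))) (nhds 0) := by
  set l := nhdsWithin (u 0) (Set.Iio (u 0))
  have hid : Tendsto (fun w : ℝ => w) l (nhds (u 0)) :=
    tendsto_id.mono_left nhdsWithin_le_nhds
  have hfα : Tendsto f l (nhds (f (u 0))) :=
    ((hf.2.1.continuousAt (Ioi_mem_nhds hα)).tendsto).mono_left nhdsWithin_le_nhds
  have hf'α : Tendsto f' l (nhds (f' (u 0))) :=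
    ((hf'c.continuousAt (Ioi_mem_nhds hα)).tendsto).mono_left nhdsWithin_le_nhds
  have hbig : Tendsto (GF N m a f f' rr rr') l
      (nhds ((a + 1 - (N:ℝ)/m) * 0 +
        0 ^ N * (a / (N:ℝ) * (u 0 * f' (u 0)) + (a - (N:ℝ)) / (N:ℝ) * f (u 0)))) :=
    (tendsto_const_nhds.mul (tendsto_omega hm hu hinv hα)).add
      (((tendsto_rr hu hinv hα).pow N).mul
        ((tendsto_const_nhds.mul (hid.mul hf'α)).add (tendsto_const_nhds.mul hfα)))
  simpa [zero_pow (show N ≠ 0 by omega)] using hbig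

lemma P_eq_int (hm : 1 < m) (hN1 : 1 ≤ N) (hf : H1cond b f)
    (hf' : ∀ x : ℝ, 0 < x → HasDerivAt f (f' x) x)
    (hf'c : ContinuousOn f' (Set.Ioi 0))
    (hu : IsRadialSolution N m f R u u')
    (hinv : IsInvSol N m (u 0) f R u rr rr' rr'')
    {v : ℝ} (hv : v ∈ Set.Ioo 0 (u 0)) (a : ℝ) :
    PF N m a f rr rr' v = ∫ τ in (u 0)..v, GF N m a f f' rr rr' τ := by
  have hα : 0 < u 0 := hv.1.trans hv.2
  set l := nhdsWithin (u 0) (Set.Iio (u 0)) with hldef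
  set G := GF N m a f f' rr rr' with hG
  have hGt : Tendsto G l (nhds 0) := tendsto_GF hm hN1 hf hf'c hu hinv hα a
  have hInt : IntervalIntegrable G volume v (u 0) :=
    intervalIntegrable_of_tendsto hv.2
      (fun x hx => GF_contAt hf hf'c hu hinv ⟨hv.1.trans_le hx.1, hx.2⟩ a) hGt
  have hprim := continuousOn_primitive_interval' hInt (right_mem_uIcc (a := v) (b := u 0))
  have hle : l ≤ nhdsWithin (u 0) (Set.uIcc v (u 0)) := by
    apply nhdsWithin_le_iff.2
    apply Filter.mem_of_superset
      (Ioo_mem_nhdsLT hv.2)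
    rw [uIcc_of_le hv.2.le]
    exact Set.Ioo_subset_Icc_self
  have hptend : Tendsto (fun w => ∫ τ in (u 0)..w, G τ) l (nhds 0) := by
    have hc := (hprim (u 0) right_mem_uIcc).tendsto
    rw [integral_same] at hc
    exact hc.mono_left hle
  have hT1 : Tendsto (fun w => ∫ τ in w..v, G τ) l (nhds (∫ τ in (u 0)..v, G τ)) := by
    have heq : ∀ᶠ w in l, -(∫ τ in (u 0)..w, G τ) + (∫ τ in (u 0)..v, G τ)
        = ∫ τ in w..v, G τ := by
      filter_upwards [Ioo_mem_nhdsLT hv.2]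
        with w hw
      have hw' : w ∈ Set.uIcc v (u 0) := by
        rw [uIcc_of_le hv.2.le]; exact ⟨hw.1.le, hw.2.le⟩
      have hIw : IntervalIntegrable G volume w (u 0) :=
        hInt.mono_set (uIcc_subset_uIcc hw' right_mem_uIcc)
      rw [← integral_add_adjacent_intervals hIw hInt.symm, integral_symm (u 0) w]
    refine Tendsto.congr' heq ?_
    have := hptend.neg.add (tendsto_const_nhds (x := ∫ τ in (u 0)..v, G τ))
    simpa using this
  have hT2 : Tendsto (fun w => ∫ τ in w..v, G τ) l (nhds (PF N m a f rr rr' v)) := by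
    have heq2 : ∀ᶠ w in l, PF N m a f rr rr' v - PF N m a f rr rr' w
        = ∫ τ in w..v, G τ := by
      filter_upwards [Ioo_mem_nhdsLT hα]
        with w hw
      have hsub : Set.uIcc w v ⊆ Set.Ioo 0 (u 0) := by
        intro x hx
        rcases Set.mem_uIcc.1 hx with ⟨h1, h2⟩ | ⟨h1, h2⟩
        · exact ⟨hw.1.trans_le h1, lt_of_le_of_lt h2 hv.2⟩
        · exact ⟨hv.1.trans_le h1, lt_of_le_of_lt h2 hw.2⟩
      have hderivs : ∀ x ∈ Set.uIcc w v, HasDerivAt (PF N m a f rr rr') (G x) x :=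
        fun x hx => P_deriv hm hN1 hf' hu hinv (hsub hx) a
      have hGint : IntervalIntegrable G volume w v :=
        ContinuousOn.intervalIntegrable
          (fun x hx => (GF_contAt hf hf'c hu hinv (hsub hx) a).continuousWithinAt)
      exact (integral_eq_sub_of_hasDerivAt hderivs hGint).symm
    refine Tendsto.congr' heq2 ?_
    have := (tendsto_const_nhds (x := PF N m a f rr rr' v)).sub
      (tendsto_PF hm hN1 hf hu hinv hα a)
    simpa using this
  haveI : l.NeBot := nhdsLT_neBot _
  exact (tendsto_nhds_unique hT1 hT2).symm

end key

/-- for `m > 1`, `1 ≤ N ≤ m`, (H1), and `f` continuously differentiable on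
`(0,∞)`: along the inverse `r = r(u)` of a radial solution, the function `P` admits the
integral representations of Proposition 3.2, both for `a ≠ 0` and for `a = 0`. -/
theorem stmt11 (N : ℕ) (m b : ℝ) (f f' : ℝ → ℝ) (hm : 1 < m)
    (hN1 : 1 ≤ N) (hNm : (N : ℝ) ≤ m) (hf : H1cond b f)
    (hf' : ∀ x : ℝ, 0 < x → HasDerivAt f (f' x) x)
    (hf'c : ContinuousOn f' (Set.Ioi 0))
    (R : EReal) (u u' rr rr' rr'' : ℝ → ℝ)
    (hu : IsRadialSolution N m f R u u')
    (hinv : IsInvSol N m (u 0) f R u rr rr' rr'') :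
    ∀ v ∈ Set.Ioo (0 : ℝ) (u 0), ∀ a : ℝ,
      (a ≠ 0 →
        PF N m a f rr rr' v =
          (a + 1 - (N : ℝ) / m) * (∫ τ in (u 0)..v, omegaF N m rr rr' τ) +
            a / (N : ℝ) *
              ∫ τ in (u 0)..v, rr τ ^ N * (τ * f' τ - ((N : ℝ) - a) / a * f τ)) ∧
      (a = 0 →
        PF N m a f rr rr' v =
          -(((N : ℝ) - m) / m) * (∫ τ in (u 0)..v, omegaF N m rr rr' τ) -
            ∫ τ in (u 0)..v, rr τ ^ N * f τ) := by
  intro v hv a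
  have hα : 0 < u 0 := hv.1.trans hv.2
  have hN0 : (N : ℝ) ≠ 0 := Nat.cast_ne_zero.2 (by omega)
  have hm0 : m ≠ 0 := by linarith
  set l := nhdsWithin (u 0) (Set.Iio (u 0)) with hldef
  have hkey := P_eq_int hm hN1 hf hf' hf'c hu hinv hv a
  -- integrability of ω
  have hIω : IntervalIntegrable (omegaF N m rr rr') volume v (u 0) :=
    intervalIntegrable_of_tendsto hv.2
      (fun x hx => (omega_deriv hu hinv ⟨hv.1.trans_le hx.1, hx.2⟩).continuousAt)
      (tendsto_omega hm hu hinv hα)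
  -- the second integrand
  set H : ℝ → ℝ := fun τ =>
    rr τ ^ N * (a / (N:ℝ) * (τ * f' τ) + (a - (N:ℝ)) / (N:ℝ) * f τ) with hHdef
  have hHc : ∀ x ∈ Set.Ico v (u 0), ContinuousAt H x := by
    intro x hx
    have hx' : x ∈ Set.Ioo 0 (u 0) := ⟨hv.1.trans_le hx.1, hx.2⟩
    have hrr : ContinuousAt rr x := (hinv.1 x hx').2.2.2.1.continuousAt
    have hfx : ContinuousAt f x := hf.2.1.continuousAt (Ioi_mem_nhds hx'.1)
    have hf'x : ContinuousAt f' x := hf'c.continuousAt (Ioi_mem_nhds hx'.1)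
    exact (hrr.pow N).mul
      ((continuousAt_const.mul (continuousAt_id.mul hf'x)).add (continuousAt_const.mul hfx))
  have hHt : Tendsto H l (nhds 0) := by
    have hid : Tendsto (fun w : ℝ => w) l (nhds (u 0)) :=
      tendsto_id.mono_left nhdsWithin_le_nhds
    have hfα : Tendsto f l (nhds (f (u 0))) :=
      ((hf.2.1.continuousAt (Ioi_mem_nhds hα)).tendsto).mono_left nhdsWithin_le_nhds
    have hf'α : Tendsto f' l (nhds (f' (u 0))) :=
      ((hf'c.continuousAt (Ioi_mem_nhds hα)).tendsto).mono_left nhdsWithin_le_nhds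
    have hbig : Tendsto H l (nhds (0 ^ N *
        (a / (N:ℝ) * (u 0 * f' (u 0)) + (a - (N:ℝ)) / (N:ℝ) * f (u 0)))) :=
      (((tendsto_rr hu hinv hα).pow N).mul
        ((tendsto_const_nhds.mul (hid.mul hf'α)).add (tendsto_const_nhds.mul hfα)))
    simpa [zero_pow (show N ≠ 0 by omega)] using hbig
  have hIH : IntervalIntegrable H volume v (u 0) :=
    intervalIntegrable_of_tendsto hv.2 hHc hHt
  have hsplit : (∫ τ in (u 0)..v, GF N m a f f' rr rr' τ) =
      (a + 1 - (N:ℝ)/m) * (∫ τ in (u 0)..v, omegaF N m rr rr' τ) +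
        ∫ τ in (u 0)..v, H τ := by
    rw [← intervalIntegral.integral_const_mul]
    exact integral_add (hIω.symm.const_mul _) hIH.symm
  constructor
  · intro ha
    rw [hkey, hsplit]
    congr 1
    rw [← intervalIntegral.integral_const_mul]
    apply integral_congr
    intro τ _
    simp only [hHdef]
    field_simp
    ring
  · intro ha
    rw [hkey, hsplit, sub_eq_add_neg]
    congr 1
    · congr 2
      rw [ha]
      field_simp
      ring
    · rw [← intervalIntegral.integral_neg]
      apply integral_congr
      intro τ _
      simp only [hHdef, ha]
      field_simp
      ring

end
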